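/- Let γ̃ ∈ M₂(ℝ) be symmetric positive definite with det γ̃ = 1, and let M₁, M₂ ∈ M₂(ℝ) be linearly independent symmetric matrices with ⟨γ̃, M₁⟩ = ⟨γ̃, M₂⟩ = 0. Let B = B(M₁, M₂) be the matrix with entries B¹¹ = 2(M₁²² M₂¹² − M₁¹² M₂²²), B¹² = B²¹ = M₁¹¹ M₂²² − M₁²² M₂¹¹, B²² = 2(M₁¹² M₂¹¹ − M₁¹¹ M₂¹²). Then det B > 0, B¹¹ ≠ 0, and γ̃ = sign(B¹¹) (det B)^{−1/2} B. -/

import Mathlib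

open Matrix

/-- The Frobenius inner product `⟨A,B⟩ = tr(AᵀB)`. -/
noncomputable def frob (A B : Matrix (Fin 2) (Fin 2) ℝ) : ℝ := (Aᵀ * B).trace

/-- The generalized cross product of two symmetric 2×2 matrices (formula (3.3) of the paper). -/
def crossS2 (M₁ M₂ : Matrix (Fin 2) (Fin 2) ℝ) : Matrix (Fin 2) (Fin 2) ℝ :=
  !![2 * (M₁ 1 1 * M₂ 0 1 - M₁ 0 1 * M₂ 1 1), M₁ 0 0 * M₂ 1 1 - M₁ 1 1 * M₂ 0 0;
     M₁ 0 0 * M₂ 1 1 - M₁ 1 1 * M₂ 0 0, 2 * (M₁ 0 1 * M₂ 0 0 - M₁ 0 0 * M₂ 0 1)]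

/-- Explicit pointwise reconstruction formula (3.4): a symmetric positive definite matrix `γ̃`
of determinant one, orthogonal to two linearly independent symmetric matrices `M₁, M₂`, equals
`sign(B¹¹)(det B)^{-1/2} B` where `B = B(M₁,M₂)` is the generalized cross product. -/
theorem stmt9 (γt M₁ M₂ : Matrix (Fin 2) (Fin 2) ℝ)
    (hγpd : γt.PosDef) (hγdet : γt.det = 1)
    (h₁ : M₁.IsSymm) (h₂ : M₂.IsSymm)
    (hindep : LinearIndependent ℝ ![M₁, M₂])
    (horth₁ : frob γt M₁ = 0) (horth₂ : frob γt M₂ = 0) :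
    0 < (crossS2 M₁ M₂).det ∧ crossS2 M₁ M₂ 0 0 ≠ 0 ∧
      γt = (Real.sign (crossS2 M₁ M₂ 0 0) * (Real.sqrt (crossS2 M₁ M₂).det)⁻¹) • crossS2 M₁ M₂ := by
  have hγ10 : γt 1 0 = γt 0 1 := by
    have h := hγpd.1.apply 0 1
    simp only [RCLike.star_def, starRingEnd_apply, star_trivial] at h
    first | exact h | exact h.symm
  have hm1 : M₁ 1 0 = M₁ 0 1 := h₁.apply 0 1
  have hm2 : M₂ 1 0 = M₂ 0 1 := h₂.apply 0 1
  -- orthogonality expanded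
  have H1 : γt 0 0 * M₁ 0 0 + 2 * γt 0 1 * M₁ 0 1 + γt 1 1 * M₁ 1 1 = 0 := by
    rw [frob, Matrix.trace_fin_two] at horth₁
    simp only [Matrix.mul_apply, Fin.sum_univ_two, Matrix.transpose_apply] at horth₁
    rw [hγ10, hm1] at horth₁
    linarith [horth₁]
  have H2 : γt 0 0 * M₂ 0 0 + 2 * γt 0 1 * M₂ 0 1 + γt 1 1 * M₂ 1 1 = 0 := by
    rw [frob, Matrix.trace_fin_two] at horth₂
    simp only [Matrix.mul_apply, Fin.sum_univ_two, Matrix.transpose_apply] at horth₂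
    rw [hγ10, hm2] at horth₂
    linarith [horth₂]
  -- positivity of a := γt 0 0 and determinant
  have ha : 0 < γt 0 0 := by
    have h0 : (![1, 0] : Fin 2 → ℝ) ≠ 0 := by
      intro h; have := congrFun h 0; simp at this
    have := hγpd.dotProduct_mulVec_pos h0
    simpa [Matrix.mulVec, dotProduct, Fin.sum_univ_two] using this
  have hdet : γt 0 0 * γt 1 1 - γt 0 1 * γt 0 1 = 1 := by
    rw [Matrix.det_fin_two] at hγdet
    rw [hγ10] at hγdet; linarith [hγdet]
  -- pair independence
  have hpair : ∀ s t : ℝ, s • M₁ + t • M₂ = 0 → s = 0 ∧ t = 0 :=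
    LinearIndependent.pair_iff.1 hindep
  -- entries of B
  have hc00 : crossS2 M₁ M₂ 0 0 = 2 * (M₁ 1 1 * M₂ 0 1 - M₁ 0 1 * M₂ 1 1) := by simp [crossS2]
  have hc01 : crossS2 M₁ M₂ 0 1 = M₁ 0 0 * M₂ 1 1 - M₁ 1 1 * M₂ 0 0 := by simp [crossS2]
  have hc10 : crossS2 M₁ M₂ 1 0 = M₁ 0 0 * M₂ 1 1 - M₁ 1 1 * M₂ 0 0 := by simp [crossS2]
  have hc11 : crossS2 M₁ M₂ 1 1 = 2 * (M₁ 0 1 * M₂ 0 0 - M₁ 0 0 * M₂ 0 1) := by simp [crossS2]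
  have hcdet : (crossS2 M₁ M₂).det =
      2 * (M₁ 1 1 * M₂ 0 1 - M₁ 0 1 * M₂ 1 1) * (2 * (M₁ 0 1 * M₂ 0 0 - M₁ 0 0 * M₂ 0 1))
        - (M₁ 0 0 * M₂ 1 1 - M₁ 1 1 * M₂ 0 0) * (M₁ 0 0 * M₂ 1 1 - M₁ 1 1 * M₂ 0 0) := by
    rw [Matrix.det_fin_two, hc00, hc01, hc10, hc11]
  -- key algebraic relations
  have k1 : γt 0 0 * (M₁ 0 0 * M₂ 1 1 - M₁ 1 1 * M₂ 0 0)
      = γt 0 1 * (2 * (M₁ 1 1 * M₂ 0 1 - M₁ 0 1 * M₂ 1 1)) := by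
    linear_combination M₂ 1 1 * H1 - M₁ 1 1 * H2
  have k2 : γt 0 0 * (2 * (M₁ 0 1 * M₂ 0 0 - M₁ 0 0 * M₂ 0 1))
      = γt 1 1 * (2 * (M₁ 1 1 * M₂ 0 1 - M₁ 0 1 * M₂ 1 1)) := by
    linear_combination 2 * (M₁ 0 1 * H2 - M₂ 0 1 * H1)
  -- B ≠ 0 (as a vector of entries)
  have hBne : ¬ (crossS2 M₁ M₂ 0 0 = 0 ∧ crossS2 M₁ M₂ 0 1 = 0 ∧ crossS2 M₁ M₂ 1 1 = 0) := by
    rintro ⟨e0, e1, e2⟩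
    rw [hc00] at e0; rw [hc01] at e1; rw [hc11] at e2
    have hqr : M₁ 1 1 * M₂ 0 1 = M₁ 0 1 * M₂ 1 1 := by linarith
    have hpr : M₁ 0 0 * M₂ 1 1 = M₁ 1 1 * M₂ 0 0 := by linarith
    have hpq : M₁ 0 1 * M₂ 0 0 = M₁ 0 0 * M₂ 0 1 := by linarith
    have hM1 : ¬ (M₁ 0 0 = 0 ∧ M₁ 0 1 = 0 ∧ M₁ 1 1 = 0) := by
      rintro ⟨z0, z1, z2⟩
      have hM1z : M₁ = 0 := by
        rw [Matrix.eta_fin_two M₁, hm1, z0, z1, z2]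
        ext i j; fin_cases i <;> fin_cases j <;> rfl
      have := (hpair 1 0 (by rw [hM1z]; simp)).1
      norm_num at this
    have key : ∀ lam : ℝ, lam * M₁ 0 0 = M₂ 0 0 → lam * M₁ 0 1 = M₂ 0 1 →
        lam * M₁ 1 1 = M₂ 1 1 → False := by
      intro lam e3 e4 e5
      have hz : lam • M₁ + (-1 : ℝ) • M₂ = 0 := by
        rw [Matrix.eta_fin_two M₁, Matrix.eta_fin_two M₂, hm1, hm2]
        ext i j
        fin_cases i <;> fin_cases j <;>
          simp only [Fin.zero_eta, Fin.mk_one, Matrix.add_apply, Matrix.smul_apply,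
            Matrix.cons_val_zero, Matrix.cons_val_one, Matrix.head_cons, Matrix.head_fin_const,
            Matrix.of_apply, Matrix.cons_val', Matrix.empty_val', Matrix.cons_val_fin_one,
            smul_eq_mul, Matrix.zero_apply] <;>
          first
            | linear_combination e3 | linear_combination e4 | linear_combination e5
      have := (hpair lam (-1) hz).2
      norm_num at this
    rcases (not_and_or.1 hM1) with hp | h'
    · exact key (M₂ 0 0 / M₁ 0 0) (by field_simp)
        (by field_simp; first | linear_combination hpq | linear_combination -hpq) (by field_simp; first | linear_combination hpr | linear_combination -hpr)
    rcases (not_and_or.1 h') with hq | hr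
    · exact key (M₂ 0 1 / M₁ 0 1) (by field_simp; first | linear_combination hpq | linear_combination -hpq)
        (by field_simp) (by field_simp; first | linear_combination hqr | linear_combination -hqr)
    · exact key (M₂ 1 1 / M₁ 1 1) (by field_simp; first | linear_combination hpr | linear_combination -hpr)
        (by field_simp; first | linear_combination hqr | linear_combination -hqr) (by field_simp)
  -- B00 ≠ 0
  have hB00ne : crossS2 M₁ M₂ 0 0 ≠ 0 := by
    intro h0
    rw [hc00] at h0
    have e1 : crossS2 M₁ M₂ 0 1 = 0 := by
      rw [hc01]
      have h : γt 0 0 * (M₁ 0 0 * M₂ 1 1 - M₁ 1 1 * M₂ 0 0) = 0 := by rw [k1, h0]; ring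
      exact (mul_eq_zero.1 h).resolve_left ha.ne'
    have e2 : crossS2 M₁ M₂ 1 1 = 0 := by
      rw [hc11]
      have h : γt 0 0 * (2 * (M₁ 0 1 * M₂ 0 0 - M₁ 0 0 * M₂ 0 1)) = 0 := by rw [k2, h0]; ring
      exact (mul_eq_zero.1 h).resolve_left ha.ne'
    exact hBne ⟨by rw [hc00]; exact h0, e1, e2⟩
  rw [hc00] at hB00ne
  -- determinant formula
  have hdetB : (crossS2 M₁ M₂).det = (2 * (M₁ 1 1 * M₂ 0 1 - M₁ 0 1 * M₂ 1 1) / γt 0 0) ^ 2 := by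
    rw [hcdet]
    have h : γt 0 0 ^ 2 *
        (2 * (M₁ 1 1 * M₂ 0 1 - M₁ 0 1 * M₂ 1 1) * (2 * (M₁ 0 1 * M₂ 0 0 - M₁ 0 0 * M₂ 0 1))
          - (M₁ 0 0 * M₂ 1 1 - M₁ 1 1 * M₂ 0 0) * (M₁ 0 0 * M₂ 1 1 - M₁ 1 1 * M₂ 0 0))
        = (2 * (M₁ 1 1 * M₂ 0 1 - M₁ 0 1 * M₂ 1 1)) ^ 2
            * (γt 0 0 * γt 1 1 - γt 0 1 * γt 0 1) := by
      linear_combination (γt 0 0 * (2 * (M₁ 1 1 * M₂ 0 1 - M₁ 0 1 * M₂ 1 1))) * k2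
        - (γt 0 0 * (M₁ 0 0 * M₂ 1 1 - M₁ 1 1 * M₂ 0 0)
            + γt 0 1 * (2 * (M₁ 1 1 * M₂ 0 1 - M₁ 0 1 * M₂ 1 1))) * k1
    rw [hdet] at h
    field_simp
    linear_combination h
  have hdpos : 0 < (crossS2 M₁ M₂).det := by
    rw [hdetB]
    positivity
  refine ⟨hdpos, by rw [hc00]; exact hB00ne, ?_⟩
  -- the scalar coefficient equals a / B00
  have hsqrt : Real.sqrt ((crossS2 M₁ M₂).det)
      = |2 * (M₁ 1 1 * M₂ 0 1 - M₁ 0 1 * M₂ 1 1)| / γt 0 0 := by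
    rw [hdetB, Real.sqrt_sq_eq_abs, abs_div, abs_of_pos ha]
  have hcoef : Real.sign (crossS2 M₁ M₂ 0 0) * (Real.sqrt (crossS2 M₁ M₂).det)⁻¹
      = γt 0 0 / (2 * (M₁ 1 1 * M₂ 0 1 - M₁ 0 1 * M₂ 1 1)) := by
    rw [hc00, hsqrt]
    rcases hB00ne.lt_or_gt with h | h
    · rw [Real.sign_of_neg h, abs_of_neg h]
      field_simp
    · rw [Real.sign_of_pos h, abs_of_pos h]
      field_simp
  rw [hcoef]
  ext i j
  fin_cases i <;> fin_cases j <;>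
    simp only [Fin.zero_eta, Fin.mk_one, Matrix.smul_apply, smul_eq_mul]
  · rw [hc00]; rw [div_mul_cancel₀ _ hB00ne]
  · rw [hc01]; rw [div_mul_eq_mul_div, eq_div_iff hB00ne]; linear_combination -k1
  · rw [hc10, hγ10]; rw [div_mul_eq_mul_div, eq_div_iff hB00ne]; linear_combination -k1
  · rw [hc11]; rw [div_mul_eq_mul_div, eq_div_iff hB00ne]; linear_combination -k2
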